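/- For all 0 ≤ y₁, y₂ < k, the function ξ satisfies the two-point identity ξ(y₂) = e^{(μ/σ²)(y₂−k)} · sinh(Ξ(y₂−y₁))/sinh(Ξ(k−y₁)) + e^{(μ/σ²)(y₂−y₁)} · (sinh(Ξ(k−y₂))/sinh(Ξ(k−y₁))) · ξ(y₁). -/

import Mathlib

open Real Set

noncomputable section

/-- `Ξ = sqrt(2r/σ² + μ²/σ⁴)`. -/
def Xi (r μ σ : ℝ) : ℝ := Real.sqrt (2 * r / σ ^ 2 + μ ^ 2 / σ ^ 4)

/-- The closed-form expression for the Laplace transform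
`ξ(y) = E[e^{-r τ_D(k)} | D_0 = y]` of the drawdown time of a Brownian motion
with drift `μ` and volatility `σ`. -/
def xiFormula (r μ σ k y : ℝ) : ℝ :=
  exp (μ / σ ^ 2 * (y - k)) * (sinh (Xi r μ σ * y) / sinh (Xi r μ σ * k)) +
    exp (μ / σ ^ 2 * y) * (sinh (Xi r μ σ * (k - y)) / sinh (Xi r μ σ * k)) *
      (exp (-(μ / σ ^ 2) * k) * Xi r μ σ /
        (Xi r μ σ * cosh (Xi r μ σ * k) - μ / σ ^ 2 * sinh (Xi r μ σ * k)))

lemma xi_aux (m A k y₁ y₂ c : ℝ) (hS : sinh (A*k) ≠ 0) (hS1 : sinh (A*(k-y₁)) ≠ 0) :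
    exp (m*(y₂-k)) * (sinh (A*y₂)/sinh (A*k)) + exp (m*y₂) * (sinh (A*(k-y₂))/sinh (A*k)) * c
    = exp (m*(y₂-k)) * (sinh (A*(y₂-y₁))/sinh (A*(k-y₁)))
      + exp (m*(y₂-y₁)) * (sinh (A*(k-y₂))/sinh (A*(k-y₁))) *
        (exp (m*(y₁-k)) * (sinh (A*y₁)/sinh (A*k)) + exp (m*y₁) * (sinh (A*(k-y₁))/sinh (A*k)) * c) := by
  have hS1' : sinh (A*k) * cosh (A*y₁) - cosh (A*k) * sinh (A*y₁) ≠ 0 := by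
    rw [← Real.sinh_sub, ← mul_sub] at *; exact hS1
  simp only [mul_sub, Real.sinh_sub, Real.exp_sub]
  have hS' : sinh (k*A) ≠ 0 := by rwa [mul_comm]
  have hS1'' : sinh (k*A) * cosh (A*y₁) - cosh (k*A) * sinh (A*y₁) ≠ 0 := by rwa [mul_comm k A]
  field_simp
  ring

theorem xi_two_point_identity (σ μ r k : ℝ) (hσ : 0 < σ) (hr : 0 < r) (hk : 0 < k) :
    ∀ y₁ ∈ Set.Ico (0 : ℝ) k, ∀ y₂ ∈ Set.Ico (0 : ℝ) k,
      xiFormula r μ σ k y₂ =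
        exp (μ / σ ^ 2 * (y₂ - k)) *
            (sinh (Xi r μ σ * (y₂ - y₁)) / sinh (Xi r μ σ * (k - y₁))) +
          exp (μ / σ ^ 2 * (y₂ - y₁)) *
            (sinh (Xi r μ σ * (k - y₂)) / sinh (Xi r μ σ * (k - y₁))) *
            xiFormula r μ σ k y₁ := by
  intro y₁ hy₁ y₂ hy₂
  obtain ⟨h10, h1k⟩ := hy₁
  have hA : 0 < Xi r μ σ := by
    apply Real.sqrt_pos.mpr
    have h1 : 0 < 2 * r / σ ^ 2 := by positivity
    have h2 : 0 ≤ μ ^ 2 / σ ^ 4 := by positivity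
    linarith
  have hS : sinh (Xi r μ σ * k) ≠ 0 := by
    rw [Real.sinh_ne_zero]; positivity
  have hS1 : sinh (Xi r μ σ * (k - y₁)) ≠ 0 := by
    rw [Real.sinh_ne_zero]
    have : 0 < k - y₁ := by linarith
    positivity
  simp only [xiFormula]
  exact xi_aux (μ / σ ^ 2) (Xi r μ σ) k y₁ y₂ _ hS hS1
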